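/- arXiv:2303.11887 — 4 statements merged into one kernel-verified Lean document; each statement's English description precedes it below -/
import Mathlib

section
/- Let x = [x₁|…|x_ℓ] ∈ F_{q^m}^n have sum-rank weight τ with a fixed rank distribution rk_q(x_i) = τ_i for each i (Σ τ_i = τ). Then there exists a unique cartesian product V = V₁ × … × V_ℓ of elementary linear subspaces with V_i ∈ E_{τ_i}(F_{q^m}^η) such that x ∈ V. -/
open Module Submodule Set Finset

/-- The `F_q`-rank of a vector over `F_{q^m}`: the rank of its matrix representation
over `F_q`, i.e. the `F_q`-dimension of the span of its entries. -/
noncomputable def rkq (Fq : Type) {Fqm : Type} [Field Fq] [Field Fqm] [Algebra Fq Fqm]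
    {ι : Type} (v : ι → Fqm) : ℕ :=
  Module.finrank Fq (Submodule.span Fq (Set.range v))

/-- The ℓ-sum-rank weight of a vector split into ℓ blocks of length η. -/
noncomputable def wtSR (Fq : Type) {Fqm : Type} [Field Fq] [Field Fqm] [Algebra Fq Fqm]
    {l η : ℕ} (x : Fin l → Fin η → Fqm) : ℕ :=
  ∑ i, rkq Fq (x i)

/-- The ℓ-sum-rank distance. -/
noncomputable def dSR (Fq : Type) {Fqm : Type} [Field Fq] [Field Fqm] [Algebra Fq Fqm]
    {l η : ℕ} (x y : Fin l → Fin η → Fqm) : ℕ :=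
  wtSR Fq (x - y)

/-- The ball of sum-rank radius τ around x. -/
noncomputable def srBall (Fq : Type) {Fqm : Type} [Field Fq] [Field Fqm] [Algebra Fq Fqm]
    {l η : ℕ} (x : Fin l → Fin η → Fqm) (τ : ℕ) : Set (Fin l → Fin η → Fqm) :=
  {y | dSR Fq x y ≤ τ}

/-- The Gaussian binomial coefficient `[n choose t]_q = ∏_{i=1}^t (q^{n-t+i}-1)/(q^i-1)`
(the division is exact). -/
def qBinom (q n t : ℕ) : ℕ :=
  (∏ i ∈ Finset.range t, (q ^ (n - t + (i + 1)) - 1)) / (∏ i ∈ Finset.range t, (q ^ (i + 1) - 1))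

/-- `NMq q n m t`: the number of `m × n` matrices over `F_q` of rank `t`. -/
def NMq (q n m t : ℕ) : ℕ :=
  qBinom q n t * ∏ i ∈ Finset.range t, (q ^ m - q ^ i)

/-- A submodule of `F_{q^m}^n` is an elementary linear subspace if it is spanned by
vectors all of whose entries lie in `F_q`. -/
def IsElementary (Fq : Type) {Fqm : Type} [Field Fq] [Field Fqm] [Algebra Fq Fqm]
    {ι : Type} (V : Submodule Fqm (ι → Fqm)) : Prop :=
  ∃ S : Set (ι → Fqm), (∀ v ∈ S, ∀ i, ∃ c : Fq, v i = algebraMap Fq Fqm c) ∧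
    Submodule.span Fqm S = V

section Aux
variable (Fq Fqm : Type) [Field Fq] [Field Fqm] [Algebra Fq Fqm] {η : ℕ}

/-- Entrywise algebra map on vectors, as an `Fq`-linear map. -/
noncomputable def phiSR : (Fin η → Fq) →ₗ[Fq] (Fin η → Fqm) where
  toFun v := fun j => algebraMap Fq Fqm (v j)
  map_add' v w := by funext j; simp
  map_smul' c v := by
    funext j
    simp [Algebra.smul_def]

/-- `Fq`-coordinates of a vector `y : Fin η → Fqm` with respect to a fixed basis of
`Fqm` over `Fq`. -/
noncomputable def wvSR (y : Fin η → Fqm) (k : Basis.ofVectorSpaceIndex Fq Fqm) :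
    Fin η → Fq :=
  fun j => (Basis.ofVectorSpace Fq Fqm).repr (y j) k

variable {Fq Fqm}

lemma phiSR_apply (v : Fin η → Fq) (j : Fin η) :
    phiSR Fq Fqm v j = algebraMap Fq Fqm (v j) := rfl

lemma wvSR_sum {n : ℕ} (f : Fin n → Fqm) (u : Fin n → Fin η → Fq)
    (k : Basis.ofVectorSpaceIndex Fq Fqm) :
    wvSR Fq Fqm (∑ i, f i • phiSR Fq Fqm (u i)) k
      = ∑ i, ((Basis.ofVectorSpace Fq Fqm).repr (f i) k) • u i := by
  funext j
  have h1 : (∑ i, f i • phiSR Fq Fqm (u i)) j = ∑ i, (u i j) • f i := by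
    simp only [Finset.sum_apply, Pi.smul_apply, phiSR_apply, smul_eq_mul, Algebra.smul_def]
    exact Finset.sum_congr rfl fun i _ => mul_comm _ _
  simp only [wvSR, h1, map_sum, map_smul, Finsupp.coe_finset_sum, Finset.sum_apply,
    Finsupp.coe_smul, Pi.smul_apply, smul_eq_mul]
  exact Finset.sum_congr rfl fun i _ => mul_comm _ _

lemma sum_repr_subset (a : Fqm) (T : Finset (Basis.ofVectorSpaceIndex Fq Fqm))
    (hT : ((Basis.ofVectorSpace Fq Fqm).repr a).support ⊆ T) :
    ∑ k ∈ T, ((Basis.ofVectorSpace Fq Fqm).repr a k) • (Basis.ofVectorSpace Fq Fqm k : Fqm)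
      = a := by
  rw [← Finset.sum_subset hT (fun k _ hk => by
    rw [Finsupp.notMem_support_iff.mp hk, zero_smul])]
  conv_rhs => rw [← (Basis.ofVectorSpace Fq Fqm).linearCombination_repr a]
  rw [Finsupp.linearCombination_apply, Finsupp.sum]

lemma mem_span_image_iff (y : Fin η → Fqm) (W : Submodule Fq (Fin η → Fq)) :
    y ∈ span Fqm (phiSR Fq Fqm '' W) ↔ ∀ k, wvSR Fq Fqm y k ∈ W := by
  classical
  constructor
  · intro hy k
    obtain ⟨n, f, g, hfg⟩ := mem_span_set'.mp hy
    have hu : ∀ i, ∃ u ∈ W, phiSR Fq Fqm u = (g i : Fin η → Fqm) := fun i => (g i).2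
    choose u hu1 hu2 using hu
    have hy' : y = ∑ i, f i • phiSR Fq Fqm (u i) := by
      rw [← hfg]; exact Finset.sum_congr rfl fun i _ => by rw [hu2]
    rw [hy', wvSR_sum]
    exact Submodule.sum_mem _ fun i _ => Submodule.smul_mem _ _ (hu1 i)
  · intro h
    set b := Basis.ofVectorSpace Fq Fqm with hb
    set T : Finset (Basis.ofVectorSpaceIndex Fq Fqm) :=
      Finset.univ.biUnion (fun j : Fin η => (b.repr (y j)).support) with hTdef
    have hsub : ∀ j : Fin η, (b.repr (y j)).support ⊆ T := fun j =>
      Finset.subset_biUnion_of_mem (fun j : Fin η => (b.repr (y j)).support)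
        (Finset.mem_univ j)
    have hy : y = ∑ k ∈ T, (b k : Fqm) • phiSR Fq Fqm (wvSR Fq Fqm y k) := by
      funext j
      rw [Finset.sum_apply]
      have heq : ∀ k ∈ T, ((b k : Fqm) • phiSR Fq Fqm (wvSR Fq Fqm y k)) j
          = (b.repr (y j) k) • (b k : Fqm) := by
        intro k _
        simp only [Pi.smul_apply, phiSR_apply, wvSR, smul_eq_mul, Algebra.smul_def]
        rw [mul_comm]
      rw [Finset.sum_congr rfl heq, sum_repr_subset (y j) T (hsub j)]
    rw [hy]
    exact Submodule.sum_mem _ fun k _ => Submodule.smul_mem _ _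
      (subset_span (Set.mem_image_of_mem _ (h k)))

lemma phiSR_linearIndependent {d : ℕ} (u : Fin d → Fin η → Fq)
    (h : LinearIndependent Fq u) :
    LinearIndependent Fqm (fun i => phiSR Fq Fqm (u i)) := by
  rw [Fintype.linearIndependent_iff]
  intro g hg i
  set b := Basis.ofVectorSpace Fq Fqm
  have key : ∀ k, ∑ i, (b.repr (g i) k) • u i = 0 := by
    intro k
    have h0 := wvSR_sum g u k
    rw [hg] at h0
    rw [← h0]
    funext j
    simp [wvSR]
  have h2 : b.repr (g i) = 0 := by
    ext k
    exact Fintype.linearIndependent_iff.mp h _ (key k) i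
  exact (LinearEquiv.map_eq_zero_iff b.repr).mp h2

lemma span_image_span (s : Set (Fin η → Fq)) :
    span Fqm (phiSR Fq Fqm '' (span Fq s : Set (Fin η → Fq)))
      = span Fqm (phiSR Fq Fqm '' s) := by
  refine le_antisymm (span_le.mpr ?_)
    (span_mono (Set.image_mono Submodule.subset_span))
  rintro _ ⟨w, hw, rfl⟩
  induction hw using Submodule.span_induction with
  | mem w hw => exact subset_span (Set.mem_image_of_mem _ hw)
  | zero => rw [map_zero]; exact Submodule.zero_mem _
  | add a b ha hb hA hB => rw [map_add]; exact Submodule.add_mem _ hA hB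
  | smul c a ha hA =>
      rw [map_smul, ← algebraMap_smul Fqm c (phiSR Fq Fqm a)]
      exact Submodule.smul_mem _ _ hA

lemma finrank_span_image (W : Submodule Fq (Fin η → Fq)) :
    finrank Fqm (span Fqm (phiSR Fq Fqm '' (W : Set (Fin η → Fq)))) = finrank Fq W := by
  set d := finrank Fq W with hd
  let u : Basis (Fin d) Fq W := Module.finBasis Fq W
  have hv : LinearIndependent Fq (fun i => (u i : Fin η → Fq)) :=
    u.linearIndependent.map' W.subtype W.ker_subtype
  have hspan : span Fq (Set.range (fun i => (u i : Fin η → Fq))) = W := by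
    have := congrArg (Submodule.map W.subtype) u.span_eq
    rwa [Submodule.map_span, ← Set.range_comp, Submodule.map_subtype_top] at this
  have h0 := span_image_span (Fqm := Fqm) (Set.range fun i => ((u i : Fin η → Fq)))
  rw [hspan] at h0
  have key : span Fqm (phiSR Fq Fqm '' (W : Set (Fin η → Fq)))
      = span Fqm (Set.range (fun i => phiSR Fq Fqm (u i : Fin η → Fq))) := by
    rw [h0, ← Set.range_comp, Function.comp_def]
  have h1 : LinearIndependent Fqm (fun i => phiSR Fq Fqm ((u i : Fin η → Fq))) :=
    phiSR_linearIndependent (fun i => (u i : Fin η → Fq)) hv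
  rw [key, finrank_span_eq_card h1, Fintype.card_fin]

lemma rkq_eq_finrank_wv (y : Fin η → Fqm) :
    rkq Fq y = finrank Fq (span Fq (Set.range (wvSR Fq Fqm y))) := by
  classical
  set b := Basis.ofVectorSpace Fq Fqm with hb
  set T : Finset (Basis.ofVectorSpaceIndex Fq Fqm) :=
    Finset.univ.biUnion (fun j : Fin η => (b.repr (y j)).support) with hTdef
  set M : Matrix (Fin η) {k // k ∈ T} Fq := fun j k => b.repr (y j) k.1 with hM
  -- the linear map sending coordinates over T to the element of Fqm
  set G : ({k // k ∈ T} → Fq) →ₗ[Fq] Fqm :=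
    Fintype.linearCombination Fq (fun k : {k // k ∈ T} => (b k.1 : Fqm)) with hG
  have hsub : ∀ j : Fin η, (b.repr (y j)).support ⊆ T := fun j =>
    Finset.subset_biUnion_of_mem (fun j : Fin η => (b.repr (y j)).support)
      (Finset.mem_univ j)
  have hGM : ∀ j, G (M j) = y j := by
    intro j
    rw [hG, Fintype.linearCombination_apply]
    have : ∑ k : {k // k ∈ T}, M j k • (b k.1 : Fqm)
        = ∑ k ∈ T, (b.repr (y j) k) • (b k : Fqm) := by
      rw [← Finset.sum_attach T (fun k => (b.repr (y j) k) • (b k : Fqm))]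
      rfl
    rw [this]
    exact sum_repr_subset (y j) T (hsub j)
  have hGinj : Function.Injective G := by
    rw [← LinearMap.ker_eq_bot, LinearMap.ker_eq_bot']
    intro f hf
    have hind : LinearIndependent Fq (fun k : {k // k ∈ T} => (b k.1 : Fqm)) :=
      b.linearIndependent.comp (fun k : {k // k ∈ T} => k.1) Subtype.val_injective
    funext k
    exact Fintype.linearIndependent_iff.mp hind f (by rwa [hG, Fintype.linearCombination_apply] at hf) k
  have h1 : rkq Fq y = finrank Fq (span Fq (Set.range M)) := by
    have hmap : Submodule.map G (span Fq (Set.range M)) = span Fq (Set.range y) := by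
      rw [Submodule.map_span, ← Set.range_comp]
      congr 1
      exact congrArg _ (funext hGM)
    rw [rkq, ← hmap]
    exact (LinearEquiv.finrank_eq (Submodule.equivMapOfInjective G hGinj _)).symm
  have h2 : span Fq (Set.range (wvSR Fq Fqm y)) = span Fq (Set.range M.transpose) := by
    refine le_antisymm (span_le.mpr ?_) (span_mono ?_)
    · rintro _ ⟨k, rfl⟩
      by_cases hk : k ∈ T
      · exact subset_span ⟨⟨k, hk⟩, rfl⟩
      · have : wvSR Fq Fqm y k = 0 := by
          funext j
          have hns : k ∉ (b.repr (y j)).support := fun hmem =>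
            hk (hsub j hmem)
          exact Finsupp.notMem_support_iff.mp hns
        rw [this]
        exact Submodule.zero_mem _
    · rintro _ ⟨k, rfl⟩
      exact ⟨k.1, rfl⟩
  rw [h1, h2]
  have e1 := Matrix.rank_eq_finrank_span_row M.transpose
  have e2 := Matrix.rank_eq_finrank_span_row M
  rw [Matrix.rank_transpose] at e1
  exact e2.symm.trans e1

end Aux



section Block
variable {Fq Fqm : Type} [Field Fq] [Field Fqm] [Algebra Fq Fqm] {η : ℕ}

theorem existsUnique_elementary (y : Fin η → Fqm) :
    ∃! V : Submodule Fqm (Fin η → Fqm),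
      IsElementary Fq V ∧ finrank Fqm V = rkq Fq y ∧ y ∈ V := by
  set W : Submodule Fq (Fin η → Fq) := span Fq (Set.range (wvSR Fq Fqm y)) with hW
  refine ⟨span Fqm (phiSR Fq Fqm '' (W : Set (Fin η → Fq))), ⟨?_, ?_, ?_⟩, ?_⟩
  · exact ⟨phiSR Fq Fqm '' (W : Set (Fin η → Fq)),
      fun v hv j => by obtain ⟨w, _, rfl⟩ := hv; exact ⟨w j, rfl⟩, rfl⟩
  · rw [finrank_span_image, rkq_eq_finrank_wv (Fq := Fq) (Fqm := Fqm) y]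
  · exact (mem_span_image_iff y W).mpr fun k => subset_span (Set.mem_range_self k)
  · rintro V ⟨⟨S, hS, hSV⟩, hrank, hy⟩
    classical
    set US : Set (Fin η → Fq) := {u | phiSR Fq Fqm u ∈ S} with hUS
    have hSU : phiSR Fq Fqm '' US = S := by
      apply Set.Subset.antisymm
      · rintro _ ⟨u, hu, rfl⟩; exact hu
      · intro v hv
        have he : ∀ j, ∃ c : Fq, v j = algebraMap Fq Fqm c := hS v hv
        choose c hc using he
        refine ⟨c, ?_, ?_⟩
        · show phiSR Fq Fqm c ∈ S
          have : phiSR Fq Fqm c = v := by funext j; rw [phiSR_apply, ← hc]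
          rwa [this]
        · funext j; rw [phiSR_apply, ← hc]
    set W' : Submodule Fq (Fin η → Fq) := span Fq US with hW'
    have hV : V = span Fqm (phiSR Fq Fqm '' (W' : Set (Fin η → Fq))) := by
      rw [hW', span_image_span, hSU, hSV]
    have hle : W ≤ W' := by
      rw [hW]
      refine span_le.mpr ?_
      rintro _ ⟨k, rfl⟩
      exact (mem_span_image_iff y W').mp (hV ▸ hy) k
    have hfr : finrank Fq W' ≤ finrank Fq W := by
      have h1 : finrank Fq W' = finrank Fqm V := by rw [hV, finrank_span_image]
      rw [h1, hrank, rkq_eq_finrank_wv (Fq := Fq) (Fqm := Fqm) y]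
    have : W = W' := Submodule.eq_of_le_of_finrank_le hle hfr
    rw [hV, ← this]

end Block

/-- A vector with a fixed sum-rank weight distribution lies in a unique cartesian product
of elementary linear subspaces of the prescribed dimensions. -/
theorem mem_unique_product_of_elementary_subspaces
    (Fq Fqm : Type) [Field Fq] [Field Fqm] [Algebra Fq Fqm] (l η τ : ℕ)
    (x : Fin l → Fin η → Fqm) (τv : Fin l → ℕ)
    (hτ : ∀ i, rkq Fq (x i) = τv i) (hsum : (∑ i, τv i) = τ) :
    ∃! V : Fin l → Submodule Fqm (Fin η → Fqm),
      ∀ i, IsElementary Fq (V i) ∧ Module.finrank Fqm (V i) = τv i ∧ x i ∈ V i := by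
  have h : ∀ i, ∃! V : Submodule Fqm (Fin η → Fqm),
      IsElementary Fq V ∧ finrank Fqm V = τv i ∧ x i ∈ V := fun i => by
    rw [← hτ i]
    exact existsUnique_elementary (x i)
  refine ⟨fun i => (h i).choose, fun i => (h i).choose_spec.1, ?_⟩
  intro V' hV'
  funext i
  exact (h i).choose_spec.2 (V' i) (hV' i)
end

section
/- Let V be a k-dimensional elementary linear subspace of F_{q^m}^n and u ∈ V with rank weight k. For any direct-sum decomposition V = A ⊕ B into elementary linear subspaces A of dimension a and B of dimension k−a, the projections satisfy rk_q(u^{(A)}) = a and rk_q(u^{(B)}) = k−a. -/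
open Module Submodule Set Finset

lemma rkq_le_of_mem_elementary (Fq Fqm : Type) [Field Fq] [Field Fqm] [Algebra Fq Fqm]
    (n : ℕ) (W : Submodule Fqm (Fin n → Fqm)) (hW : IsElementary Fq W)
    (u : Fin n → Fqm) (hu : u ∈ W) : rkq Fq u ≤ Module.finrank Fqm W := by
  classical
  obtain ⟨S, hS, hspan⟩ := hW
  obtain ⟨t, hts, htspan, htli⟩ := exists_linearIndependent Fqm S
  have htfin : t.Finite := htli.setFinite
  have hmem : u ∈ span Fqm t := by rw [htspan, hspan]; exact hu
  rw [mem_span_set] at hmem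
  obtain ⟨c, hsupp, hc⟩ := hmem
  set F : Finset Fqm := c.support.image c with hF
  have key : ∀ i, u i ∈ span Fq ((F : Set Fqm)) := by
    intro i
    have : u i = ∑ v ∈ c.support, c v * v i := by
      rw [← hc, Finsupp.sum]
      simp [Finset.sum_apply]
    rw [this]
    apply Submodule.sum_mem
    intro v hv
    obtain ⟨e, he⟩ := hS v (hts (hsupp hv)) i
    rw [he, mul_comm, ← Algebra.smul_def]
    exact Submodule.smul_mem _ e (subset_span (by simp [hF]; exact ⟨v, Finsupp.mem_support_iff.mp hv, rfl⟩))
  have h1 : span Fq (Set.range u) ≤ span Fq ((F : Set Fqm)) := by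
    rw [span_le]; rintro _ ⟨i, rfl⟩; exact key i
  have h2 : rkq Fq u ≤ Module.finrank Fq (span Fq ((F : Set Fqm))) := by
    haveI : FiniteDimensional Fq (span Fq ((F : Set Fqm))) :=
      FiniteDimensional.span_of_finite Fq F.finite_toSet
    exact Submodule.finrank_mono h1
  have h3 : Module.finrank Fq (span Fq ((F : Set Fqm))) ≤ F.card := by
    simpa using finrank_span_le_card (R := Fq) ((F : Set Fqm))
  have h4 : F.card ≤ c.support.card := by rw [hF]; exact Finset.card_image_le
  have h5 : (c.support.card : ℕ) ≤ Module.finrank Fqm W := by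
    haveI : Fintype t := htfin.fintype
    have hcard : Module.finrank Fqm (span Fqm t) = t.toFinset.card :=
      finrank_span_set_eq_card htli
    have hsub : c.support ⊆ t.toFinset := by
      intro v hv; simpa using hsupp hv
    calc c.support.card ≤ t.toFinset.card := Finset.card_le_card hsub
      _ = Module.finrank Fqm W := by rw [← hcard, htspan, hspan]
  omega

lemma rkq_add_le (Fq Fqm : Type) [Field Fq] [Field Fqm] [Algebra Fq Fqm]
    (n : ℕ) (x y : Fin n → Fqm) : rkq Fq (x + y) ≤ rkq Fq x + rkq Fq y := by
  haveI : FiniteDimensional Fq (span Fq (Set.range x)) :=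
    FiniteDimensional.span_of_finite Fq (Set.finite_range x)
  haveI : FiniteDimensional Fq (span Fq (Set.range y)) :=
    FiniteDimensional.span_of_finite Fq (Set.finite_range y)
  have h1 : span Fq (Set.range (x + y)) ≤ span Fq (Set.range x) ⊔ span Fq (Set.range y) := by
    rw [span_le]
    rintro _ ⟨i, rfl⟩
    exact Submodule.add_mem_sup (subset_span ⟨i, rfl⟩) (subset_span ⟨i, rfl⟩)
  calc rkq Fq (x + y) ≤ Module.finrank Fq ↥(span Fq (Set.range x) ⊔ span Fq (Set.range y)) :=
        Submodule.finrank_mono h1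
    _ ≤ rkq Fq x + rkq Fq y := finrank_add_le_finrank_add_finrank _ _

/-- Projections of a full-rank vector of an elementary subspace V = A ⊕ B onto the
elementary components have ranks equal to the component dimensions. -/
theorem rkq_proj_of_elementary_decomposition
    (Fq Fqm : Type) [Field Fq] [Field Fqm] [Algebra Fq Fqm] (n k a : ℕ) (ha : a ≤ k)
    (V A B : Submodule Fqm (Fin n → Fqm))
    (hV : IsElementary Fq V) (hA : IsElementary Fq A) (hB : IsElementary Fq B)
    (hdV : Module.finrank Fqm V = k) (hdA : Module.finrank Fqm A = a)
    (hdB : Module.finrank Fqm B = k - a)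
    (hinf : A ⊓ B = ⊥) (hsup : A ⊔ B = V)
    (u uA uB : Fin n → Fqm) (huV : u ∈ V) (hu : rkq Fq u = k)
    (huA : uA ∈ A) (huB : uB ∈ B) (hsum : u = uA + uB) :
    rkq Fq uA = a ∧ rkq Fq uB = k - a := by
  have h1 : rkq Fq uA ≤ a := hdA ▸ rkq_le_of_mem_elementary Fq Fqm n A hA uA huA
  have h2 : rkq Fq uB ≤ k - a := hdB ▸ rkq_le_of_mem_elementary Fq Fqm n B hB uB huB
  have h3 : rkq Fq u ≤ rkq Fq uA + rkq Fq uB := hsum ▸ rkq_add_le Fq Fqm n uA uB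
  omega
end

section
/- Let V be a k-dimensional elementary linear subspace of F_{q^m}^n and A an a-dimensional elementary linear subspace of V. Then there exist exactly q^{a(k−a)} elementary linear subspaces B ⊆ V of dimension k−a with A ⊕ B = V; consequently there are q^{a(k−a)} · [k choose a]_q ordered pairs (A,B) of elementary linear subspaces of V with dim A = a, dim B = k−a, and A ⊕ B = V. -/
open Module Submodule Set Finset

section Corr
variable (Fq Fqm : Type) [Field Fq] [Field Fqm] [Algebra Fq Fqm] (n : ℕ)

/-- coordinatewise algebra map as an Fq-linear map. -/
noncomputable def toFqm : (Fin n → Fq) →ₗ[Fq] (Fin n → Fqm) :=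
  LinearMap.pi fun j => (Algebra.linearMap Fq Fqm).comp (LinearMap.proj j)

variable {Fq Fqm n}

lemma toFqm_apply (x : Fin n → Fq) (j : Fin n) : toFqm Fq Fqm n x j = algebraMap Fq Fqm (x j) := rfl

lemma toFqm_injective : Function.Injective (toFqm Fq Fqm n) := by
  intro x y h
  funext j
  exact (algebraMap Fq Fqm).injective (congrFun h j)

lemma li_toFqm {ι : Type*} {v : ι → Fin n → Fq} (hv : LinearIndependent Fq v) :
    LinearIndependent Fqm (fun i => toFqm Fq Fqm n (v i)) := by
  classical
  set B := Basis.ofVectorSpace Fq Fqm with hB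
  rw [linearIndependent_iff'] at hv ⊢
  intro s g hg i hi
  have key : ∀ b, B.repr (g i) b = 0 := by
    intro b
    refine hv s (fun i => B.repr (g i) b) ?_ i hi
    funext j
    have h1 : (∑ i ∈ s, g i • toFqm Fq Fqm n (v i)) j = (0 : Fqm) := by rw [hg]; rfl
    rw [Finset.sum_apply] at h1
    simp only [Pi.smul_apply] at h1
    have h2 : ∀ i ∈ s, g i • toFqm Fq Fqm n (v i) j = (v i j) • g i := by
      intro i _
      rw [toFqm_apply, smul_eq_mul, Algebra.smul_def, mul_comm]
    rw [Finset.sum_congr rfl h2] at h1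
    have h3 := congrArg (fun x => B.repr x b) h1
    simp only [map_sum, map_smul] at h3
    simp only [Finset.sum_apply, Pi.smul_apply, Pi.zero_apply, smul_eq_mul]
    simpa [mul_comm] using h3
  have : B.repr (g i) = 0 := Finsupp.ext key
  simpa using congrArg B.repr.symm this

variable (Fq Fqm n) in
/-- Extension of an Fq-subspace to an elementary Fqm-subspace. -/
noncomputable def Eext (W : Submodule Fq (Fin n → Fq)) : Submodule Fqm (Fin n → Fqm) :=
  Submodule.span Fqm (toFqm Fq Fqm n '' W)

variable (Fq Fqm n) in
/-- Restriction of an Fqm-subspace to an Fq-subspace. -/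
noncomputable def Rext (V : Submodule Fqm (Fin n → Fqm)) : Submodule Fq (Fin n → Fq) :=
  (V.restrictScalars Fq).comap (toFqm Fq Fqm n)

lemma Eext_span (S : Set (Fin n → Fq)) :
    Eext Fq Fqm n (Submodule.span Fq S) = Submodule.span Fqm (toFqm Fq Fqm n '' S) := by
  apply le_antisymm
  · refine Submodule.span_le.2 ?_
    rintro _ ⟨x, hx, rfl⟩
    have h : Submodule.span Fq S ≤
        ((Submodule.span Fqm (toFqm Fq Fqm n '' S)).restrictScalars Fq).comap (toFqm Fq Fqm n) :=
      Submodule.span_le.2 fun y hy => Submodule.subset_span (Set.mem_image_of_mem _ hy)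
    exact h hx
  · exact Submodule.span_le.2 fun _ ⟨x, hx, h⟩ =>
      h ▸ Submodule.subset_span ⟨x, Submodule.subset_span hx, rfl⟩

lemma Eext_elementary (W : Submodule Fq (Fin n → Fq)) : IsElementary Fq (Eext Fq Fqm n W) :=
  ⟨toFqm Fq Fqm n '' W, fun _ ⟨x, _, h⟩ i => ⟨x i, by rw [← h]; rfl⟩, rfl⟩

lemma exists_spanning_family (W : Submodule Fq (Fin n → Fq)) :
    ∃ u : Fin (Module.finrank Fq W) → (Fin n → Fq),
      LinearIndependent Fq u ∧ Submodule.span Fq (Set.range u) = W := by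
  let b := Module.finBasis Fq W
  refine ⟨fun i => (b i : Fin n → Fq), b.linearIndependent.map' W.subtype (Submodule.ker_subtype W), ?_⟩
  have : Set.range (fun i => (b i : Fin n → Fq)) = W.subtype '' Set.range b := by
    rw [← Set.range_comp]; rfl
  rw [this, Submodule.span_image, b.span_eq, Submodule.map_top, Submodule.range_subtype]

lemma Eext_eq_span (W : Submodule Fq (Fin n → Fq)) :
    ∃ u : Fin (Module.finrank Fq W) → (Fin n → Fq), LinearIndependent Fq u ∧
      Submodule.span Fq (Set.range u) = W ∧
      Eext Fq Fqm n W = Submodule.span Fqm (Set.range (fun i => toFqm Fq Fqm n (u i))) := by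
  obtain ⟨u, hu, hspan⟩ := exists_spanning_family W
  refine ⟨u, hu, hspan, ?_⟩
  have h := Eext_span (Fqm := Fqm) (Set.range u)
  rw [hspan] at h
  rw [h, ← Set.range_comp]; rfl

lemma finrank_Eext (W : Submodule Fq (Fin n → Fq)) :
    Module.finrank Fqm ↥(Eext Fq Fqm n W) = Module.finrank Fq ↥W := by
  obtain ⟨u, hu, _, hE⟩ := Eext_eq_span (Fqm := Fqm) W
  rw [hE]
  have h2 := finrank_span_eq_card (li_toFqm (Fqm := Fqm) hu)
  rw [h2, Fintype.card_fin]

instance fd_Eext (W : Submodule Fq (Fin n → Fq)) : FiniteDimensional Fqm (Eext Fq Fqm n W) := by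
  obtain ⟨u, _, _, hE⟩ := Eext_eq_span (Fqm := Fqm) W
  rw [hE]
  exact FiniteDimensional.span_of_finite Fqm (Set.finite_range _)

lemma Rext_Eext (W : Submodule Fq (Fin n → Fq)) : Rext Fq Fqm n (Eext Fq Fqm n W) = W := by
  obtain ⟨u, hu, hspan, hE⟩ := Eext_eq_span (Fqm := Fqm) W
  apply le_antisymm
  · intro x hx
    have hfx : toFqm Fq Fqm n x ∈ Eext Fq Fqm n W := hx
    by_contra hxW
    have hxW' : x ∉ Submodule.span Fq (Set.range u) := by rw [hspan]; exact hxW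
    have hli : LinearIndependent Fq (fun o => Option.casesOn' o x u : Option _ → (Fin n → Fq)) :=
      hu.option hxW'
    have hli2 := li_toFqm (Fqm := Fqm) hli
    have : LinearIndependent Fqm
        (fun o => Option.casesOn' o (toFqm Fq Fqm n x) (fun i => toFqm Fq Fqm n (u i)) :
          Option _ → (Fin n → Fqm)) := by
      convert hli2 using 1
      funext o
      cases o <;> rfl
    have := (linearIndependent_option'.1 this).2
    rw [← hE] at this
    exact this hfx
  · intro x hx
    exact Submodule.subset_span ⟨x, hx, rfl⟩

lemma Eext_injective : Function.Injective (Eext Fq Fqm n) := by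
  intro W1 W2 h
  rw [← Rext_Eext (Fqm := Fqm) W1, h, Rext_Eext]

lemma Eext_of_elementary {V : Submodule Fqm (Fin n → Fqm)} (hV : IsElementary Fq V) :
    Eext Fq Fqm n (Rext Fq Fqm n V) = V := by
  obtain ⟨S, hS, rfl⟩ := hV
  apply le_antisymm
  · refine Submodule.span_le.2 ?_
    rintro _ ⟨x, hx, rfl⟩
    exact hx
  · refine Submodule.span_le.2 fun s hs => ?_
    have hx : ∀ j, s j = algebraMap Fq Fqm (Classical.choose (hS s hs j)) := fun j =>
      Classical.choose_spec (hS s hs j)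
    set x : Fin n → Fq := fun j => Classical.choose (hS s hs j)
    have hfx : toFqm Fq Fqm n x = s := by funext j; rw [toFqm_apply]; exact (hx j).symm
    have hxR : x ∈ Rext Fq Fqm n (Submodule.span Fqm S) := by
      show toFqm Fq Fqm n x ∈ Submodule.span Fqm S
      rw [hfx]; exact Submodule.subset_span hs
    exact hfx ▸ Submodule.subset_span ⟨x, hxR, rfl⟩

lemma Eext_sup (W1 W2 : Submodule Fq (Fin n → Fq)) :
    Eext Fq Fqm n (W1 ⊔ W2) = Eext Fq Fqm n W1 ⊔ Eext Fq Fqm n W2 := by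
  have h1 : W1 ⊔ W2 = Submodule.span Fq ((W1 : Set _) ∪ (W2 : Set _)) := by
    rw [Submodule.span_union, Submodule.span_eq, Submodule.span_eq]
  rw [h1, Eext_span, Set.image_union, Submodule.span_union]; rfl

lemma Eext_bot : Eext Fq Fqm n ⊥ = ⊥ := by
  rw [eq_bot_iff]
  refine Submodule.span_le.2 ?_
  rintro _ ⟨x, hx, rfl⟩
  simp only [SetLike.mem_coe, Submodule.mem_bot] at hx ⊢
  rw [hx, map_zero]

lemma Eext_inf_bot {W1 W2 : Submodule Fq (Fin n → Fq)} (h : W1 ⊓ W2 = ⊥) :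
    Eext Fq Fqm n W1 ⊓ Eext Fq Fqm n W2 = ⊥ := by
  have hsup : Module.finrank Fqm ↥(Eext Fq Fqm n W1 ⊔ Eext Fq Fqm n W2) =
      Module.finrank Fq ↥W1 + Module.finrank Fq ↥W2 := by
    rw [← Eext_sup, finrank_Eext]
    have := Submodule.finrank_sup_add_finrank_inf_eq W1 W2
    rw [h, finrank_bot, add_zero] at this
    exact this
  have h2 := Submodule.finrank_sup_add_finrank_inf_eq (Eext Fq Fqm n W1) (Eext Fq Fqm n W2)
  rw [hsup, finrank_Eext, finrank_Eext] at h2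
  have h3 : Module.finrank Fqm ↥(Eext Fq Fqm n W1 ⊓ Eext Fq Fqm n W2) = 0 := by omega
  haveI : FiniteDimensional Fqm ↥(Eext Fq Fqm n W1 ⊓ Eext Fq Fqm n W2) :=
    Submodule.finiteDimensional_of_le inf_le_left
  exact Submodule.finrank_eq_zero.1 h3

end Corr


section Count
variable {K M : Type*} [Field K] [AddCommGroup M] [Module K M]
  [FiniteDimensional K M]

/-- complements of p are in bijection with Hom(q₀, p) for a fixed complement q₀ -/
noncomputable def complEquivHom (p q₀ : Submodule K M) (h : IsCompl p q₀) :
    {q' : Submodule K M // IsCompl p q'} ≃ (↥q₀ →ₗ[K] ↥p) :=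
  (Submodule.isComplEquivProj p).trans
  { toFun := fun f => (f : M →ₗ[K] ↥p) ∘ₗ q₀.subtype
    invFun := fun g =>
      ⟨p.projectionOnto q₀ h + g ∘ₗ (q₀.projectionOnto p h.symm), by
        intro x
        simp [Submodule.projectionOnto_apply_left,
          Submodule.projectionOnto_apply_right]⟩
    left_inv := by
      rintro ⟨f, hf⟩
      ext x
      set a := p.projectionOnto q₀ h x with ha
      set b := q₀.projectionOnto p h.symm x with hb
      have hab : (a : M) + (b : M) = x :=
        Submodule.projection_add_projection_eq_self h x
      simp only [LinearMap.add_apply, LinearMap.comp_apply, Submodule.subtype_apply,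
        Subtype.coe_mk]
      conv_rhs => rw [← hab]
      conv_lhs => rw [← hab]
      simp [map_add, hf, Submodule.projectionOnto_apply_left,
        Submodule.projectionOnto_apply_right]
    right_inv := by
      intro g
      ext y
      simp [Submodule.projectionOnto_apply_left,
        Submodule.projectionOnto_apply_of_mem_right h y.2] }

end Count

section Count2
variable {K M : Type*} [Field K] [Fintype K] [AddCommGroup M] [Module K M]
  [FiniteDimensional K M]

lemma card_isCompl (p : Submodule K M) :
    Nat.card {q' : Submodule K M // IsCompl p q'} =
      Fintype.card K ^ ((Module.finrank K M - Module.finrank K ↥p) * Module.finrank K ↥p) := by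
  obtain ⟨q₀, h⟩ := p.exists_isCompl
  rw [Nat.card_congr (complEquivHom p q₀ h)]
  haveI : Finite ↥q₀ := Module.finite_of_finite K
  haveI : Finite ↥p := Module.finite_of_finite K
  haveI : Finite (↥q₀ →ₗ[K] ↥p) :=
    Finite.of_injective (fun f (x : ↥q₀) => f x) (fun f g hfg => LinearMap.ext fun x => congrFun hfg x)
  haveI : Fintype (↥q₀ →ₗ[K] ↥p) := Fintype.ofFinite _
  rw [Nat.card_eq_fintype_card, card_eq_pow_finrank (K := K), Module.finrank_linearMap]
  congr 2
  have := Submodule.finrank_add_eq_of_isCompl h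
  omega

lemma card_complements {k a : ℕ} (WV WA : Submodule K M) (hle : WA ≤ WV)
    (hk : Module.finrank K ↥WV = k) (ha' : Module.finrank K ↥WA = a) :
    Nat.card {WB : Submodule K M // WA ⊓ WB = ⊥ ∧ WA ⊔ WB = WV} =
      Fintype.card K ^ (a * (k - a)) := by
  have hinj : Function.Injective WV.subtype := Subtype.coe_injective
  set p : Submodule K ↥WV := WA.comap WV.subtype with hp
  have hmapp : p.map WV.subtype = WA := by
    rw [hp, Submodule.map_comap_subtype, inf_eq_right.2 hle]
  have e : {WB : Submodule K M // WA ⊓ WB = ⊥ ∧ WA ⊔ WB = WV} ≃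
      {q' : Submodule K ↥WV // IsCompl p q'} := by
    refine ⟨fun WB => ⟨WB.1.comap WV.subtype, ?_⟩, fun q' => ⟨(q'.1.map WV.subtype), ?_, ?_⟩, ?_, ?_⟩
    · obtain ⟨WB, h1, h2⟩ := WB
      have hBle : WB ≤ WV := le_sup_right.trans h2.le
      constructor
      · rw [disjoint_iff, hp, ← Submodule.comap_inf, h1, Submodule.comap_bot,
          Submodule.ker_subtype]
      · rw [codisjoint_iff]
        apply Submodule.map_injective_of_injective hinj
        rw [Submodule.map_sup, hmapp, Submodule.map_comap_subtype, inf_eq_right.2 hBle,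
          Submodule.map_top, Submodule.range_subtype, h2]
    · rw [← hmapp, ← Submodule.map_inf _ hinj, (disjoint_iff.1 q'.2.1), Submodule.map_bot]
    · rw [← hmapp, ← Submodule.map_sup, codisjoint_iff.1 q'.2.2, Submodule.map_top,
        Submodule.range_subtype]
    · rintro ⟨WB, h1, h2⟩
      have hBle : WB ≤ WV := le_sup_right.trans h2.le
      exact Subtype.ext (by simp only [Submodule.map_comap_subtype]; exact inf_eq_right.2 hBle)
    · rintro ⟨q', hq'⟩
      exact Subtype.ext (Submodule.comap_map_eq_of_injective hinj q')
  rw [Nat.card_congr e, card_isCompl]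
  have hpa : Module.finrank K ↥p = a := by
    rw [← ha']
    exact (Submodule.comapSubtypeEquivOfLe hle).finrank_eq
  rw [hpa, hk, mul_comm]

end Count2

lemma qBinom_arith {q k a N : ℕ} (hq : 2 ≤ q) (ha : a ≤ k)
    (h : N * ∏ i ∈ Finset.range a, (q ^ a - q ^ i) = ∏ i ∈ Finset.range a, (q ^ k - q ^ i)) :
    N = qBinom q k a := by
  have key : ∀ m, a ≤ m → ∏ i ∈ Finset.range a, (q ^ m - q ^ i) =
      (∏ i ∈ Finset.range a, q ^ i) * ∏ i ∈ Finset.range a, (q ^ (m - a + (i + 1)) - 1) := by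
    intro m hm
    have h1 : ∏ i ∈ Finset.range a, (q ^ m - q ^ i) =
        ∏ i ∈ Finset.range a, (q ^ i * (q ^ (m - i) - 1)) := by
      refine Finset.prod_congr rfl fun i hi => ?_
      have him : i ≤ m := le_of_lt (lt_of_lt_of_le (Finset.mem_range.1 hi) hm)
      rw [Nat.mul_sub, mul_one, ← pow_add, Nat.add_sub_cancel' him]
    have h2 : ∏ i ∈ Finset.range a, (q ^ (m - a + (i + 1)) - 1) =
        ∏ i ∈ Finset.range a, (q ^ (m - i) - 1) := by
      rw [← Finset.prod_range_reflect]
      refine Finset.prod_congr rfl fun i hi => ?_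
      have : i < a := Finset.mem_range.1 hi
      congr 2
      omega
    rw [h1, Finset.prod_mul_distrib, h2]
  have hP : 0 < ∏ i ∈ Finset.range a, q ^ i :=
    Finset.prod_pos fun i _ => pow_pos (lt_of_lt_of_le two_pos hq) i
  have hD : 0 < ∏ i ∈ Finset.range a, (q ^ (i + 1) - 1) :=
    Finset.prod_pos fun i _ => Nat.sub_pos_of_lt (Nat.one_lt_pow (Nat.succ_ne_zero i) hq)
  have ha' : ∏ i ∈ Finset.range a, (q ^ (a - a + (i + 1)) - 1) =
      ∏ i ∈ Finset.range a, (q ^ (i + 1) - 1) := by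
    refine Finset.prod_congr rfl fun i _ => ?_
    rw [Nat.sub_self, Nat.zero_add]
  rw [key a le_rfl, key k ha, ha'] at h
  have hND : N * ∏ i ∈ Finset.range a, (q ^ (i + 1) - 1) =
      ∏ i ∈ Finset.range a, (q ^ (k - a + (i + 1)) - 1) := by
    apply Nat.eq_of_mul_eq_mul_left hP
    calc (∏ i ∈ Finset.range a, q ^ i) * (N * ∏ i ∈ Finset.range a, (q ^ (i + 1) - 1))
        = N * ((∏ i ∈ Finset.range a, q ^ i) * ∏ i ∈ Finset.range a, (q ^ (i + 1) - 1)) := by ring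
      _ = _ := by rw [h]
  rw [qBinom, ← hND, Nat.mul_div_cancel _ hD]

section Count3
variable {K M : Type*} [Field K] [Fintype K] [AddCommGroup M] [Module K M]
  [FiniteDimensional K M]

lemma card_subspaces_mul (a : ℕ) (ha : a ≤ Module.finrank K M) :
    Nat.card {W : Submodule K M // Module.finrank K ↥W = a} *
      ∏ i ∈ Finset.range a, (Fintype.card K ^ a - Fintype.card K ^ i) =
      ∏ i ∈ Finset.range a, (Fintype.card K ^ Module.finrank K M - Fintype.card K ^ i) := by
  classical
  haveI : Finite M := Module.finite_of_finite K
  set q := Fintype.card K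
  set X := {s : Fin a → M // LinearIndependent K s} with hX
  set π : X → {W : Submodule K M // Module.finrank K ↥W = a} := fun s =>
    ⟨Submodule.span K (Set.range s.1), by
      rw [finrank_span_eq_card s.2, Fintype.card_fin]⟩ with hπ
  have fibeq : ∀ W : {W : Submodule K M // Module.finrank K ↥W = a},
      Nat.card {s : X // π s = W} = ∏ i ∈ Finset.range a, (q ^ a - q ^ i) := by
    intro W
    have e : {s : X // π s = W} ≃ {t : Fin a → ↥W.1 // LinearIndependent K t} := by
      refine ⟨fun s => ⟨fun i => ⟨s.1.1 i, ?_⟩, ?_⟩, fun t => ⟨⟨fun i => (t.1 i : M), ?_⟩, ?_⟩, ?_, ?_⟩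
      · have hsp : Submodule.span K (Set.range s.1.1) = W.1 := congrArg Subtype.val s.2
        exact hsp ▸ Submodule.subset_span (Set.mem_range_self i)
      · exact LinearIndependent.of_comp W.1.subtype s.1.2
      · exact t.2.map' W.1.subtype (Submodule.ker_subtype W.1)
      · apply Subtype.ext
        show Submodule.span K (Set.range fun i => ((t.1 i : M))) = W.1
        have hr : Set.range (fun i => ((t.1 i : M))) = W.1.subtype '' Set.range t.1 := by
          rw [← Set.range_comp]; rfl
        rw [hr, Submodule.span_image]
        have htop : Submodule.span K (Set.range t.1) = ⊤ := by
          apply Submodule.eq_top_of_finrank_eq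
          rw [finrank_span_eq_card t.2, Fintype.card_fin, W.2]
        rw [htop, Submodule.map_top, Submodule.range_subtype]
      · intro s; exact Subtype.ext (Subtype.ext rfl)
      · intro t; exact Subtype.ext (funext fun i => Subtype.ext rfl)
    rw [Nat.card_congr e]
    haveI : Finite ↥W.1 := Module.finite_of_finite K
    have := card_linearIndependent (K := K) (V := ↥W.1) (k := a) (by rw [W.2])
    rw [this, W.2]
    exact Fin.prod_univ_eq_prod_range (fun j => Fintype.card K ^ a - Fintype.card K ^ j) a
  haveI : Finite (Submodule K M) := Finite.of_injective _ SetLike.coe_injective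
  haveI : Fintype {W : Submodule K M // Module.finrank K ↥W = a} := Fintype.ofFinite _
  haveI : Fintype X := Fintype.ofFinite _
  have hXcard : Nat.card X = ∏ i ∈ Finset.range a, (q ^ Module.finrank K M - q ^ i) := by
    rw [card_linearIndependent (K := K) ha]
    exact Fin.prod_univ_eq_prod_range
      (fun j => Fintype.card K ^ Module.finrank K M - Fintype.card K ^ j) a
  have hsum : Nat.card X =
      Nat.card {W : Submodule K M // Module.finrank K ↥W = a} *
        ∏ i ∈ Finset.range a, (q ^ a - q ^ i) := by
    rw [← Nat.card_congr (Equiv.sigmaFiberEquiv π)]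
    haveI : ∀ W, Fintype {s : X // π s = W} := fun W => Fintype.ofFinite _
    rw [Nat.card_eq_fintype_card, Fintype.card_sigma]
    have : ∀ W ∈ Finset.univ, Fintype.card {s : X // π s = W} =
        ∏ i ∈ Finset.range a, (q ^ a - q ^ i) := by
      intro W _
      rw [← Nat.card_eq_fintype_card, fibeq W]
    rw [Finset.sum_congr rfl this, Finset.sum_const, smul_eq_mul, Nat.card_eq_fintype_card,
      Finset.card_univ]
  rw [← hsum, hXcard]

lemma card_subspaces_eq {k : ℕ} (a : ℕ) (hk : Module.finrank K M = k) (ha : a ≤ k) :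
    Nat.card {W : Submodule K M // Module.finrank K ↥W = a} = qBinom (Fintype.card K) k a := by
  refine qBinom_arith Fintype.one_lt_card ha ?_
  rw [← hk]
  exact card_subspaces_mul a (hk ▸ ha)

end Count3

section MainAux
open Module Submodule Set Finset
variable {Fq Fqm : Type} [Field Fq] [Field Fqm] [Algebra Fq Fqm] {n : ℕ}

lemma Rext_inf (V1 V2 : Submodule Fqm (Fin n → Fqm)) :
    Rext Fq Fqm n (V1 ⊓ V2) = Rext Fq Fqm n V1 ⊓ Rext Fq Fqm n V2 := rfl

lemma Rext_bot : Rext Fq Fqm n (⊥ : Submodule Fqm (Fin n → Fqm)) = ⊥ := by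
  ext x
  constructor
  · intro hx
    have : toFqm Fq Fqm n x = 0 := hx
    rw [Submodule.mem_bot]
    exact toFqm_injective (by rw [this, map_zero])
  · intro hx
    rw [Submodule.mem_bot] at hx
    subst hx
    exact Submodule.zero_mem _

end MainAux

section CardPairs
open Module Submodule Set Finset
variable {K M : Type*} [Field K] [Fintype K] [AddCommGroup M] [Module K M]
  [FiniteDimensional K M]

lemma card_pairs {k a : ℕ} (ha : a ≤ k) (WV : Submodule K M)
    (hk : Module.finrank K ↥WV = k) :
    Nat.card {pq : Submodule K M × Submodule K M //
        Module.finrank K ↥pq.1 = a ∧ pq.1 ⊓ pq.2 = ⊥ ∧ pq.1 ⊔ pq.2 = WV} =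
      Fintype.card K ^ (a * (k - a)) * qBinom (Fintype.card K) k a := by
  classical
  haveI : Finite M := Module.finite_of_finite K
  haveI : Finite (Submodule K M) := Finite.of_injective _ SetLike.coe_injective
  set base := {W1 : Submodule K M // Module.finrank K ↥W1 = a ∧ W1 ≤ WV} with hbase_def
  have hinj : Function.Injective WV.subtype := Subtype.coe_injective
  have ebase : base ≃ {W' : Submodule K ↥WV // Module.finrank K ↥W' = a} := by
    refine ⟨fun W1 => ⟨Submodule.comap WV.subtype W1.1, ?_⟩,
      fun W' => ⟨Submodule.map WV.subtype W'.1, ?_, Submodule.map_subtype_le _ _⟩, ?_, ?_⟩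
    · exact (Submodule.comapSubtypeEquivOfLe W1.2.2).finrank_eq.trans W1.2.1
    · exact ((Submodule.equivMapOfInjective _ hinj _).finrank_eq).symm.trans W'.2
    · rintro ⟨W1, h1, h2⟩
      refine Subtype.ext ?_
      show Submodule.map WV.subtype (Submodule.comap WV.subtype W1) = W1
      rw [Submodule.map_comap_subtype]
      exact inf_eq_right.2 h2
    · rintro ⟨W', h'⟩
      exact Subtype.ext (Submodule.comap_map_eq_of_injective hinj W')
  have hbase : Nat.card base = qBinom (Fintype.card K) k a := by
    rw [Nat.card_congr ebase]
    exact card_subspaces_eq a hk ha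
  have esig : {pq : Submodule K M × Submodule K M //
        Module.finrank K ↥pq.1 = a ∧ pq.1 ⊓ pq.2 = ⊥ ∧ pq.1 ⊔ pq.2 = WV} ≃
      Σ W1 : base, {W2 : Submodule K M // W1.1 ⊓ W2 = ⊥ ∧ W1.1 ⊔ W2 = WV} := by
    refine ⟨fun pq => ⟨⟨pq.1.1, pq.2.1, le_sup_left.trans pq.2.2.2.le⟩,
      ⟨pq.1.2, pq.2.2.1, pq.2.2.2⟩⟩,
      fun s => ⟨(s.1.1, s.2.1), s.1.2.1, s.2.2.1, s.2.2.2⟩, fun _ => rfl, fun _ => rfl⟩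
  rw [Nat.card_congr esig]
  haveI : Fintype base := Fintype.ofFinite _
  haveI : ∀ W1 : base, Fintype {W2 : Submodule K M // W1.1 ⊓ W2 = ⊥ ∧ W1.1 ⊔ W2 = WV} :=
    fun _ => Fintype.ofFinite _
  rw [Nat.card_eq_fintype_card, Fintype.card_sigma]
  have hfib : ∀ W1 ∈ Finset.univ,
      Fintype.card {W2 : Submodule K M // (W1 : base).1 ⊓ W2 = ⊥ ∧ (W1 : base).1 ⊔ W2 = WV} =
        Fintype.card K ^ (a * (k - a)) := by
    intro W1 _
    rw [← Nat.card_eq_fintype_card]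
    exact card_complements WV W1.1 W1.2.2 hk W1.2.1
  rw [Finset.sum_congr rfl hfib, Finset.sum_const, smul_eq_mul, Finset.card_univ,
    ← Nat.card_eq_fintype_card, hbase, mul_comm]

end CardPairs

/-- Counting elementary complements of A inside V, and ordered complementary pairs. -/
theorem card_elementary_complements
    (Fq Fqm : Type) [Field Fq] [Fintype Fq] [Field Fqm] [Algebra Fq Fqm]
    (q n k a : ℕ) (hq : Fintype.card Fq = q) (ha : a ≤ k)
    (V A : Submodule Fqm (Fin n → Fqm))
    (hV : IsElementary Fq V) (hdV : Module.finrank Fqm V = k)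
    (hA : IsElementary Fq A) (hdA : Module.finrank Fqm A = a) (hAV : A ≤ V) :
    Nat.card {B : Submodule Fqm (Fin n → Fqm) //
        IsElementary Fq B ∧ Module.finrank Fqm B = k - a ∧ A ⊓ B = ⊥ ∧ A ⊔ B = V} =
      q ^ (a * (k - a)) ∧
    Nat.card {p : Submodule Fqm (Fin n → Fqm) × Submodule Fqm (Fin n → Fqm) //
        IsElementary Fq p.1 ∧ IsElementary Fq p.2 ∧
        Module.finrank Fqm p.1 = a ∧ Module.finrank Fqm p.2 = k - a ∧
        p.1 ⊓ p.2 = ⊥ ∧ p.1 ⊔ p.2 = V} =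
      q ^ (a * (k - a)) * qBinom q k a := by
  subst hq
  set WV := Rext Fq Fqm n V with hWV
  set WA := Rext Fq Fqm n A with hWA
  have hEV : Eext Fq Fqm n WV = V := Eext_of_elementary hV
  have hEA : Eext Fq Fqm n WA = A := Eext_of_elementary hA
  have hkV : Module.finrank Fq ↥WV = k := by
    rw [← finrank_Eext (Fqm := Fqm) WV, hEV]; exact hdV
  have haA : Module.finrank Fq ↥WA = a := by
    rw [← finrank_Eext (Fqm := Fqm) WA, hEA]; exact hdA
  have hle : WA ≤ WV := fun x hx => hAV hx
  -- dimension of a complement over Fq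
  have hdim : ∀ W1 W2 : Submodule Fq (Fin n → Fq), Module.finrank Fq ↥W1 = a →
      W1 ⊓ W2 = ⊥ → W1 ⊔ W2 = WV → Module.finrank Fq ↥W2 = k - a := by
    intro W1 W2 h0 h1 h2
    have := Submodule.finrank_sup_add_finrank_inf_eq W1 W2
    rw [h1, h2, hkV, h0, finrank_bot, add_zero] at this
    omega
  constructor
  · have e1 : {B : Submodule Fqm (Fin n → Fqm) //
        IsElementary Fq B ∧ Module.finrank Fqm B = k - a ∧ A ⊓ B = ⊥ ∧ A ⊔ B = V} ≃
        {WB : Submodule Fq (Fin n → Fq) // WA ⊓ WB = ⊥ ∧ WA ⊔ WB = WV} := by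
      refine ⟨fun B => ⟨Rext Fq Fqm n B.1, ?_, ?_⟩, fun WB => ⟨Eext Fq Fqm n WB.1,
        Eext_elementary _, ?_, ?_, ?_⟩, ?_, ?_⟩
      · rw [hWA, ← Rext_inf, B.2.2.2.1, Rext_bot]
      · apply Eext_injective (Fqm := Fqm)
        rw [Eext_sup, hEA, Eext_of_elementary B.2.1, B.2.2.2.2, hEV]
      · rw [finrank_Eext]; exact hdim WA WB.1 haA WB.2.1 WB.2.2
      · rw [← hEA]; exact Eext_inf_bot WB.2.1
      · rw [← hEA, ← Eext_sup, WB.2.2, hEV]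
      · rintro ⟨B, hB⟩
        exact Subtype.ext (Eext_of_elementary hB.1)
      · rintro ⟨WB, hWB⟩
        exact Subtype.ext (Rext_Eext WB)
    rw [Nat.card_congr e1]
    exact card_complements WV WA hle hkV haA
  · have e2 : {p : Submodule Fqm (Fin n → Fqm) × Submodule Fqm (Fin n → Fqm) //
        IsElementary Fq p.1 ∧ IsElementary Fq p.2 ∧
        Module.finrank Fqm p.1 = a ∧ Module.finrank Fqm p.2 = k - a ∧
        p.1 ⊓ p.2 = ⊥ ∧ p.1 ⊔ p.2 = V} ≃
        {pq : Submodule Fq (Fin n → Fq) × Submodule Fq (Fin n → Fq) //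
          Module.finrank Fq ↥pq.1 = a ∧ pq.1 ⊓ pq.2 = ⊥ ∧ pq.1 ⊔ pq.2 = WV} := by
      refine ⟨fun P => ⟨(Rext Fq Fqm n P.1.1, Rext Fq Fqm n P.1.2), ?_, ?_, ?_⟩,
        fun pq => ⟨(Eext Fq Fqm n pq.1.1, Eext Fq Fqm n pq.1.2),
          Eext_elementary _, Eext_elementary _, ?_, ?_, ?_, ?_⟩, ?_, ?_⟩
      · rw [← finrank_Eext (Fqm := Fqm), Eext_of_elementary P.2.1]; exact P.2.2.2.1
      · rw [← Rext_inf, P.2.2.2.2.2.1, Rext_bot]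
      · apply Eext_injective (Fqm := Fqm)
        rw [Eext_sup, Eext_of_elementary P.2.1, Eext_of_elementary P.2.2.1,
          P.2.2.2.2.2.2, hEV]
      · rw [finrank_Eext]; exact pq.2.1
      · rw [finrank_Eext]
        exact hdim pq.1.1 pq.1.2 pq.2.1 pq.2.2.1 pq.2.2.2
      · exact Eext_inf_bot pq.2.2.1
      · rw [← Eext_sup, pq.2.2.2, hEV]
      · rintro ⟨⟨P1, P2⟩, h1, h2, _⟩
        exact Subtype.ext (Prod.ext (Eext_of_elementary h1) (Eext_of_elementary h2))
      · rintro ⟨⟨W1, W2⟩, _⟩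
        exact Subtype.ext (Prod.ext (Rext_Eext W1) (Rext_Eext W2))
    rw [Nat.card_congr e2]
    exact card_pairs ha WV hkV
end

section
/- Fix x ∈ F_{q^m}^n with rank weight r. The number of vectors y ∈ F_{q^m}^n with rank weight 1 such that rk_q(x − y) = r + 1 (equivalently, wt_{SR,1}(x) + wt_{SR,1}(y) = wt_{SR,1}(x − y)) equals (q^n − q^r)(q^m − q^r)/(q − 1). -/
open Module Submodule Set Finset

section Aux
variable {Fq Fqm : Type} [Field Fq] [Field Fqm] [Algebra Fq Fqm] {n : ℕ}

noncomputable abbrev Tmap (x : Fin n → Fqm) : (Fin n → Fq) →ₗ[Fq] Fqm :=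
  Fintype.linearCombination Fq x

lemma range_Tmap (x : Fin n → Fqm) :
    LinearMap.range (Tmap x) = Submodule.span Fq (Set.range x) :=
  Fintype.range_linearCombination ..

lemma Tmap_sub_apply (x : Fin n → Fqm) (c : Fin n → Fq) (α : Fqm) (d : Fin n → Fq) :
    Tmap (Fq := Fq) (x - fun i => c i • α) d = Tmap x d - (∑ i, d i * c i) • α := by
  simp only [Fintype.linearCombination_apply, Pi.sub_apply, smul_sub, Finset.sum_sub_distrib,
    Finset.sum_smul]
  congr 1
  refine Finset.sum_congr rfl fun i _ => ?_
  rw [smul_comm, smul_smul, mul_comm]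

variable [FiniteDimensional Fq Fqm]

/-- Key characterization: the rank adds iff `α` avoids the "column space" and `c` avoids
the "row space". -/
lemma rk_sub_eq_succ_iff (x : Fin n → Fqm) (r : ℕ) (hx : rkq Fq x = r)
    (α : Fqm) (c : Fin n → Fq) :
    rkq Fq (x - fun i => c i • α) = r + 1 ↔
      (α ∉ Submodule.span Fq (Set.range x) ∧
        ∃ d ∈ LinearMap.ker (Tmap (Fq := Fq) x), ∑ i, d i * c i ≠ 0) := by
  set V := Submodule.span Fq (Set.range x) with hV
  have hrky : rkq Fq (x - fun i => c i • α) =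
      finrank Fq (LinearMap.range (Tmap (Fq := Fq) (x - fun i => c i • α))) := by
    rw [range_Tmap]; rfl
  constructor
  · intro h
    have hαV : α ∉ V := by
      intro hαV
      have hle : LinearMap.range (Tmap (Fq := Fq) (x - fun i => c i • α)) ≤ V := by
        rw [range_Tmap, Submodule.span_le]
        rintro - ⟨i, rfl⟩
        exact V.sub_mem (Submodule.subset_span ⟨i, rfl⟩) (V.smul_mem _ hαV)
      have := Submodule.finrank_mono hle
      rw [← hrky, h] at this
      have hxr : finrank Fq V = r := hx
      omega
    refine ⟨hαV, ?_⟩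
    by_contra hcon
    push_neg at hcon
    have hker : LinearMap.ker (Tmap (Fq := Fq) x) ≤
        LinearMap.ker (Tmap (Fq := Fq) (x - fun i => c i • α)) := by
      intro d hd
      rw [LinearMap.mem_ker, Tmap_sub_apply, hcon d hd, LinearMap.mem_ker.mp hd, zero_smul,
        sub_zero]
    have h1 := (Tmap (Fq := Fq) x).finrank_range_add_finrank_ker
    have h2 := (Tmap (Fq := Fq) (x - fun i => c i • α)).finrank_range_add_finrank_ker
    have h3 := Submodule.finrank_mono hker
    rw [range_Tmap] at h1
    rw [← hrky, h] at h2
    have hxr : finrank Fq V = r := hx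
    rw [hxr] at h1
    omega
  · rintro ⟨hαV, d, hd, hs⟩
    have hα0 : α ≠ 0 := fun h => hαV (h ▸ V.zero_mem)
    have hmem : α ∈ LinearMap.range (Tmap (Fq := Fq) (x - fun i => c i • α)) := by
      refine ⟨(-(∑ i, d i * c i)⁻¹) • d, ?_⟩
      rw [map_smul, Tmap_sub_apply, LinearMap.mem_ker.mp hd, zero_sub, smul_neg, neg_smul,
        neg_neg, smul_smul, inv_mul_cancel₀ hs, one_smul]
    have hrange : LinearMap.range (Tmap (Fq := Fq) (x - fun i => c i • α)) =
        V ⊔ Fq ∙ α := by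
      apply le_antisymm
      · rw [range_Tmap, Submodule.span_le]
        rintro - ⟨i, rfl⟩
        exact Submodule.sub_mem _
          (Submodule.mem_sup_left (Submodule.subset_span ⟨i, rfl⟩))
          (Submodule.mem_sup_right (Submodule.smul_mem _ _ (Submodule.mem_span_singleton_self α)))
      · refine sup_le ?_ ?_
        · rw [hV, Submodule.span_le]
          rintro - ⟨i, rfl⟩
          have hxi : x i = Tmap (Fq := Fq) (x - fun j => c j • α) (Pi.single i 1) + c i • α := by
            rw [Tmap_sub_apply]
            have h4 : Tmap (Fq := Fq) x (Pi.single i 1) = x i := by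
              classical
              rw [Fintype.linearCombination_apply_single, one_smul]
            rw [h4]
            have h5 : ∑ j, Pi.single (M := fun _ => Fq) i 1 j * c j = c i := by
              classical
              simp [Pi.single_apply, Finset.sum_ite_eq']
            rw [h5]
            ring
          rw [hxi]
          exact Submodule.add_mem _ (LinearMap.mem_range_self _ _)
            (Submodule.smul_mem _ _ hmem)
        · rw [Submodule.span_le, Set.singleton_subset_iff]
          exact hmem
    rw [hrky, hrange]
    have hinf : V ⊓ (Fq ∙ α) = ⊥ := by
      rw [eq_bot_iff]
      intro w hw
      obtain ⟨hw1, hw2⟩ := Submodule.mem_inf.mp hw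
      rw [Submodule.mem_span_singleton] at hw2
      obtain ⟨k, rfl⟩ := hw2
      rcases eq_or_ne k 0 with rfl | hk
      · simp
      · exact absurd ((Submodule.smul_mem_iff _ hk).mp hw1) hαV
    have h6 := Submodule.finrank_sup_add_finrank_inf_eq V (Fq ∙ α)
    rw [hinf, finrank_bot, add_zero, finrank_span_singleton hα0] at h6
    have hxr : finrank Fq V = r := hx
    rw [hxr] at h6
    omega

omit [FiniteDimensional Fq Fqm] in
lemma span_range_smul (α : Fqm) (c : Fin n → Fq) (hc : c ≠ 0) :
    Submodule.span Fq (Set.range fun i => c i • α) = Fq ∙ α := by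
  apply le_antisymm
  · rw [Submodule.span_le]
    rintro - ⟨i, rfl⟩
    exact Submodule.smul_mem _ _ (Submodule.mem_span_singleton_self α)
  · rw [Submodule.span_le, Set.singleton_subset_iff]
    obtain ⟨i, hi⟩ := Function.ne_iff.mp hc
    have hmem : (c i • α) ∈ Submodule.span Fq (Set.range fun j => c j • α) :=
      Submodule.subset_span ⟨i, rfl⟩
    have := Submodule.smul_mem _ ((c i)⁻¹) hmem
    rwa [inv_smul_smul₀ hi] at this

omit [FiniteDimensional Fq Fqm] in
lemma rkq_smul_eq_one (α : Fqm) (c : Fin n → Fq) (hc : c ≠ 0) (hα : α ≠ 0) :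
    rkq Fq (fun i => c i • α) = 1 := by
  rw [rkq, span_range_smul α c hc, finrank_span_singleton hα]

end Aux

/-- The number of rank-1 vectors y whose rank adds with that of a fixed rank-r vector x,
i.e. rk_q(x - y) = r + 1. -/
theorem card_rank_one_vectors_rank_additive
    (Fq Fqm : Type) [Field Fq] [Fintype Fq] [Field Fqm] [Fintype Fqm] [Algebra Fq Fqm]
    (q m n r : ℕ) (hq : Fintype.card Fq = q) (hm : Fintype.card Fqm = q ^ m)
    (x : Fin n → Fqm) (hx : rkq Fq x = r) :
    Nat.card {y : Fin n → Fqm // rkq Fq y = 1 ∧ rkq Fq (x - y) = r + 1} =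
      (q ^ n - q ^ r) * (q ^ m - q ^ r) / (q - 1) := by
  classical
  have hq2 : 2 ≤ q := hq ▸ Fintype.one_lt_card
  haveI hfd : FiniteDimensional Fq Fqm := Module.Finite.of_finite
  set V := Submodule.span Fq (Set.range x) with hV
  set T := Tmap (Fq := Fq) x with hT
  set e := (Pi.basisFun Fq (Fin n)).toDualEquiv with he'
  have he : ∀ c d : Fin n → Fq, e c d = ∑ i, d i * c i := by
    intro c d
    conv_lhs => rw [← (Pi.basisFun Fq (Fin n)).sum_repr d]
    simp only [map_sum, map_smul, he', Basis.toDualEquiv_apply, Basis.toDual_apply_left,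
      Pi.basisFun_repr, smul_eq_mul]
  set Bc := Submodule.comap e.toLinearMap (LinearMap.ker T).dualAnnihilator with hBc
  have hBc_mem : ∀ c, c ∈ Bc ↔ ∀ d ∈ LinearMap.ker T, ∑ i, d i * c i = 0 := by
    intro c
    rw [hBc, Submodule.mem_comap, Submodule.mem_dualAnnihilator]
    constructor
    · intro h d hd; rw [← he]; exact h d hd
    · intro h d hd; rw [LinearEquiv.coe_toLinearMap, he]; exact h d hd
  have hVr : finrank Fq V = r := hx
  have hkerdim : r + finrank Fq (LinearMap.ker T) = n := by
    have h1 := T.finrank_range_add_finrank_ker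
    rw [hT, range_Tmap, ← hV, hVr, Module.finrank_fintype_fun_eq_card, Fintype.card_fin] at h1
    exact h1
  have hBcdim : finrank Fq Bc = r := by
    have h1 := Submodule.finrank_quotient_add_finrank (LinearMap.ker T)
    rw [Module.finrank_fintype_fun_eq_card, Fintype.card_fin] at h1
    have h2 : finrank Fq ((Fin n → Fq) ⧸ LinearMap.ker T) =
        finrank Fq (LinearMap.ker T).dualAnnihilator :=
      LinearEquiv.finrank_eq (Subspace.quotEquivAnnihilator _)
    have h3 : finrank Fq Bc = finrank Fq (LinearMap.ker T).dualAnnihilator := by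
      rw [hBc, Submodule.comap_equiv_eq_map_symm]
      exact (LinearEquiv.finrank_eq (e.symm.submoduleMap _)).symm
    omega
  have cardV : Fintype.card V = q ^ r := by
    rw [card_eq_pow_finrank (K := Fq), hq, hVr]
  have cardBc : Fintype.card Bc = q ^ r := by
    rw [card_eq_pow_finrank (K := Fq), hq, hBcdim]
  have cardA : Fintype.card {α : Fqm // α ∉ V} = q ^ m - q ^ r := by
    rw [Fintype.card_subtype_compl, hm]
    congr 1
  have cardB : Fintype.card {c : Fin n → Fq // c ∉ Bc} = q ^ n - q ^ r := by
    rw [Fintype.card_subtype_compl]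
    have hcf : Fintype.card (Fin n → Fq) = q ^ n := by
      rw [Fintype.card_fun, hq, Fintype.card_fin]
    rw [hcf]
    congr 1
  have key : ∀ (α : Fqm) (c : Fin n → Fq),
      rkq Fq (x - fun i => c i • α) = r + 1 ↔
        (α ∉ V ∧ ∃ d ∈ LinearMap.ker T, ∑ i, d i * c i ≠ 0) :=
    fun α c => rk_sub_eq_succ_iff x r hx α c
  have hBnot : ∀ c : Fin n → Fq, c ∉ Bc ↔ ∃ d ∈ LinearMap.ker T, ∑ i, d i * c i ≠ 0 := by
    intro c
    constructor
    · intro h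
      by_contra h2
      push_neg at h2
      exact h ((hBc_mem c).mpr h2)
    · rintro ⟨d, hd, hs⟩ hmem
      exact hs ((hBc_mem c).mp hmem d hd)
  set target := {y : Fin n → Fqm // rkq Fq y = 1 ∧ rkq Fq (x - y) = r + 1} with htarget
  have hf_mem : ∀ (α : {α : Fqm // α ∉ V}) (c : {c : Fin n → Fq // c ∉ Bc}),
      rkq Fq (fun i => c.1 i • α.1) = 1 ∧ rkq Fq (x - fun i => c.1 i • α.1) = r + 1 := by
    intro α c
    have hα0 : α.1 ≠ 0 := fun h => α.2 (h ▸ V.zero_mem)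
    have hc0 : c.1 ≠ 0 := fun h => c.2 (h ▸ Bc.zero_mem)
    exact ⟨rkq_smul_eq_one _ _ hc0 hα0, (key _ _).mpr ⟨α.2, (hBnot _).mp c.2⟩⟩
  let f : {α : Fqm // α ∉ V} × {c : Fin n → Fq // c ∉ Bc} → target :=
    fun p => ⟨fun i => p.2.1 i • p.1.1, hf_mem p.1 p.2⟩
  have hfiber : ∀ y : target, Nat.card {p // f p = y} = q - 1 := by
    intro y
    set L := Submodule.span Fq (Set.range y.1) with hL
    have hL1 : finrank Fq L = 1 := y.2.1
    have cardL : Fintype.card L = q := by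
      rw [card_eq_pow_finrank (K := Fq), hq, hL1, pow_one]
    have gdef : ∀ pp : {p // f p = y}, (pp.1.1.1 ∈ L ∧ pp.1.1.1 ≠ 0) := by
      rintro ⟨⟨⟨α, hα⟩, ⟨c, hc⟩⟩, hfp⟩
      have hα0 : α ≠ 0 := fun h => hα (h ▸ V.zero_mem)
      have hc0 : c ≠ 0 := fun h => hc (h ▸ Bc.zero_mem)
      have hyv : (fun i => c i • α) = y.1 := congrArg Subtype.val hfp
      refine ⟨?_, hα0⟩
      rw [hL, ← hyv, span_range_smul α c hc0]
      exact Submodule.mem_span_singleton_self α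
    let g : {p // f p = y} → {β : L // β ≠ 0} :=
      fun pp => ⟨⟨pp.1.1.1, (gdef pp).1⟩,
        by simp only [ne_eq, Submodule.mk_eq_zero]; exact (gdef pp).2⟩
    have ginj : Function.Injective g := by
      rintro ⟨⟨⟨α, hα⟩, ⟨c, hc⟩⟩, hfp⟩ ⟨⟨⟨α', hα'⟩, ⟨c', hc'⟩⟩, hfp'⟩ hgg
      have hαα : α = α' := by
        simpa [g, Subtype.ext_iff] using hgg
      subst hαα
      have hα0 : α ≠ 0 := fun h => hα (h ▸ V.zero_mem)
      have h1 : (fun i => c i • α) = y.1 := congrArg Subtype.val hfp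
      have h2 : (fun i => c' i • α) = y.1 := congrArg Subtype.val hfp'
      have hcc : c = c' := by
        funext i
        exact smul_left_injective Fq hα0 (congrFun (h1.trans h2.symm) i)
      exact Subtype.ext (Prod.ext (Subtype.ext rfl) (Subtype.ext hcc))
    have gsurj : Function.Surjective g := by
      rintro ⟨⟨α, hαL⟩, hβ0⟩
      have hα0' : α ≠ 0 := by
        simpa only [ne_eq, Submodule.mk_eq_zero] using hβ0
      have hspan : (Fq ∙ α) = L := by
        apply Submodule.eq_of_le_of_finrank_eq
        · rw [Submodule.span_le, Set.singleton_subset_iff]; exact hαL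
        · rw [finrank_span_singleton hα0', hL1]
      have hyi : ∀ i, y.1 i ∈ Fq ∙ α := by
        intro i; rw [hspan]; exact Submodule.subset_span ⟨i, rfl⟩
      choose cc hcc using fun i => Submodule.mem_span_singleton.mp (hyi i)
      have hyv : y.1 = fun i => cc i • α := funext fun i => (hcc i).symm
      have hr : rkq Fq (x - fun i => cc i • α) = r + 1 := by
        rw [← hyv]; exact y.2.2
      obtain ⟨hαV, hex⟩ := (key α cc).mp hr
      exact ⟨⟨⟨⟨α, hαV⟩, ⟨cc, (hBnot cc).mpr hex⟩⟩, Subtype.ext hyv.symm⟩,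
        Subtype.ext (Subtype.ext rfl)⟩
    have hcg : Nat.card {p // f p = y} = Nat.card {β : L // β ≠ 0} :=
      Nat.card_eq_of_bijective g ⟨ginj, gsurj⟩
    rw [hcg, Nat.card_eq_fintype_card]
    have hcompl : Fintype.card {β : L // ¬ (β = 0)} =
        Fintype.card L - Fintype.card {β : L // β = 0} :=
      Fintype.card_subtype_compl _
    simp only [ne_eq]
    rw [hcompl, cardL, Fintype.card_subtype_eq]
  have hcard : Fintype.card ({α : Fqm // α ∉ V} × {c : Fin n → Fq // c ∉ Bc}) =
      Fintype.card target * (q - 1) := by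
    rw [← Fintype.card_congr (Equiv.sigmaFiberEquiv f)]
    rw [Fintype.card_sigma]
    have hstep : ∀ y : target, Fintype.card {p // f p = y} = q - 1 := fun y => by
      rw [← Nat.card_eq_fintype_card]; exact hfiber y
    rw [Finset.sum_congr rfl fun y _ => hstep y, Finset.sum_const, smul_eq_mul,
      Finset.card_univ]
  have hprod : (q ^ m - q ^ r) * (q ^ n - q ^ r) = Fintype.card target * (q - 1) := by
    rw [← hcard, Fintype.card_prod, cardA, cardB]
  have hpos : 0 < q - 1 := by omega
  rw [Nat.card_eq_fintype_card]
  exact (Nat.div_eq_of_eq_mul_left hpos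
    (by rw [mul_comm (q ^ n - q ^ r)]; exact hprod)).symm
end
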